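/- (Balancing theorem of Nishimoto–Tabei, parameterized by Brown–Gagie–Rossi.) There exists a set P' with P ⊆ P' ⊆ {0, …, n−1} and |P'| ≤ α·r/(α−1) — equivalently at most r/(α−1) elements are added to P — such that, setting Q' = {π(p) : p ∈ P'}, for every pair of consecutive elements q_s < q_e of Q' ∪ {n} the weight of (q_s, q_e) with respect to P' is strictly less than 2α, i.e., |{p ∈ P' : q_s < p < q_e}| < 2α. -/

import Mathlib

open Finset

/-- The successor of `q` in the set `{n} ∪ π(S)`. -/
noncomputable def nxtF (n : ℕ) (π : ℕ → ℕ) (S : Finset ℕ) (q : ℕ) : ℕ :=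
  sInf {t : ℕ | t ∈ insert n (S.image π) ∧ q < t}

lemma nxtF_spec (n : ℕ) (π : ℕ → ℕ) (S : Finset ℕ) (q : ℕ) (hq : q < n) :
    nxtF n π S q ∈ insert n (S.image π) ∧ q < nxtF n π S q :=
  Nat.sInf_mem (s := {t : ℕ | t ∈ insert n (S.image π) ∧ q < t}) ⟨n, Finset.mem_insert_self _ _, hq⟩

lemma nxtF_le (n : ℕ) (π : ℕ → ℕ) (S : Finset ℕ) {q t : ℕ}
    (ht : t ∈ insert n (S.image π)) (h : q < t) : nxtF n π S q ≤ t :=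
  Nat.sInf_le ⟨ht, h⟩

/-- Weight of the gap starting at `q`. -/
noncomputable def cntF (n : ℕ) (π : ℕ → ℕ) (S : Finset ℕ) (q : ℕ) : ℕ :=
  (S.filter (fun p => q < p ∧ p < nxtF n π S q)).card

/-- Potential function. -/
noncomputable def PhiF (n : ℕ) (π : ℕ → ℕ) (α : ℕ) (S : Finset ℕ) : ℕ :=
  ∑ q ∈ S.image π, (cntF n π S q - (α - 1))

lemma onegap (n : ℕ) (π : ℕ → ℕ) (S : Finset ℕ) (p : ℕ) :
    ((S.image π).filter (fun q => q < p ∧ p < nxtF n π S q)).card ≤ 1 := by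
  rw [Finset.card_le_one]
  intro a ha b hb
  simp only [mem_filter] at ha hb
  by_contra hne
  rcases Nat.lt_or_ge a b with h | h
  · have := nxtF_le n π S (mem_insert_of_mem hb.1) h
    omega
  · have hlt : b < a := by omega
    have := nxtF_le n π S (mem_insert_of_mem ha.1) hlt
    omega

lemma sum_cnt_le (n : ℕ) (π : ℕ → ℕ) (S : Finset ℕ) :
    ∑ q ∈ S.image π, cntF n π S q ≤ S.card := by
  unfold cntF
  rw [← Finset.card_biUnion]
  · apply card_le_card
    intro p hp
    obtain ⟨q, _, hq⟩ := mem_biUnion.1 hp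
    exact (mem_filter.1 hq).1
  · intro a ha b hb hab
    rw [Function.onFun, Finset.disjoint_left]
    intro p hpa hpb
    simp only [mem_filter] at hpa hpb
    rcases Nat.lt_or_ge a b with h | h
    · have := nxtF_le n π S (mem_insert_of_mem hb) h
      omega
    · have hlt : b < a := by omega
      have := nxtF_le n π S (mem_insert_of_mem ha) hlt
      omega

lemma Phi_le (n : ℕ) (π : ℕ → ℕ) (α : ℕ) (S : Finset ℕ) :
    PhiF n π α S ≤ S.card :=
  le_trans (Finset.sum_le_sum fun q _ => Nat.sub_le _ _) (sum_cnt_le n π S)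

lemma exists_rank : ∀ (k : ℕ) (F : Finset ℕ), k < F.card →
    ∃ x ∈ F, (F.filter (fun y => y < x)).card = k := by
  intro k
  induction k with
  | zero =>
    intro F hF
    have hne : F.Nonempty := card_pos.1 (by omega)
    refine ⟨F.min' hne, F.min'_mem hne, ?_⟩
    rw [Finset.card_eq_zero, Finset.eq_empty_iff_forall_notMem]
    intro y hy
    simp only [mem_filter] at hy
    have := F.min'_le y hy.1
    omega
  | succ k ih =>
    intro F hF
    obtain ⟨x, hxF, hx⟩ := ih F (by omega)
    have hG : (F.filter (fun y => x < y)).Nonempty := by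
      by_contra hG
      rw [not_nonempty_iff_eq_empty] at hG
      have h1 := Finset.card_filter_add_card_filter_not (s := F) (p := fun y => y < x)
      have h2 : F.filter (fun y => ¬ y < x) ⊆ {x} := by
        intro y hy
        simp only [mem_filter] at hy
        have hy2 : y ∉ F.filter (fun y => x < y) := by rw [hG]; simp
        simp only [mem_filter] at hy2
        have : ¬ x < y := fun hh => hy2 ⟨hy.1, hh⟩
        simp only [mem_singleton]
        omega
      have h3 := card_le_card h2
      simp only [card_singleton] at h3
      omega
    set x' := (F.filter (fun y => x < y)).min' hG with hx'
    have hx'mem := (F.filter (fun y => x < y)).min'_mem hG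
    rw [mem_filter] at hx'mem
    refine ⟨x', hx'mem.1, ?_⟩
    have heq : F.filter (fun y => y < x') = insert x (F.filter (fun y => y < x)) := by
      ext y
      simp only [mem_filter, mem_insert]
      constructor
      · rintro ⟨hyF, hylt⟩
        rcases Nat.lt_trichotomy y x with h | h | h
        · right; exact ⟨hyF, h⟩
        · left; exact h
        · exfalso
          have hyG : y ∈ F.filter (fun y => x < y) := mem_filter.2 ⟨hyF, h⟩
          have := (F.filter (fun y => x < y)).min'_le y hyG
          omega
      · rintro (rfl | ⟨hyF, h⟩)
        · exact ⟨hxF, hx'mem.2⟩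
        · exact ⟨hyF, by omega⟩
    rw [heq, card_insert_of_notMem (by simp [mem_filter])]
    omega
lemma step (n : ℕ) (π : ℕ → ℕ) (hπ : Set.BijOn π (Set.Iio n) (Set.Iio n))
    (α : ℕ) (hα : 2 ≤ α) (S : Finset ℕ) (hS : ∀ p ∈ S, p < n)
    {q0 : ℕ} (hq0 : q0 ∈ S.image π) (hbad : 2 * α ≤ cntF n π S q0) :
    ∃ p', p' < n ∧ p' ∉ S ∧ PhiF n π α (insert p' S) + (α - 1) ≤ PhiF n π α S := by
  have hmaps : ∀ p ∈ S, π p < n := fun p hp => hπ.mapsTo (hS p hp)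
  have hq0n : q0 < n := by
    obtain ⟨p, hp, rfl⟩ := mem_image.1 hq0
    exact hmaps p hp
  set m := nxtF n π S q0 with hm
  have hmT : m ∈ insert n (S.image π) := (nxtF_spec n π S q0 hq0n).1
  have hq0m : q0 < m := (nxtF_spec n π S q0 hq0n).2
  set F := S.filter (fun p => q0 < p ∧ p < m) with hF
  have hFc : 2 * α ≤ F.card := hbad
  obtain ⟨x, hxF, hxrank⟩ := exists_rank (α - 1) F (by omega)
  have hxF' : x ∈ S ∧ q0 < x ∧ x < m := by simpa [hF, mem_filter] using hxF
  obtain ⟨hxS, hq0x, hxm⟩ := hxF'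
  have hxn : x < n := hS x hxS
  have hxT : x ∉ insert n (S.image π) := by
    intro h
    have := nxtF_le n π S h hq0x
    omega
  obtain ⟨p', hp'n, hp'x⟩ := hπ.surjOn (show x ∈ Set.Iio n from hxn)
  have hp'n' : p' < n := hp'n
  have hp'S : p' ∉ S := by
    intro h
    apply hxT
    apply mem_insert_of_mem
    rw [← hp'x]
    exact mem_image_of_mem π h
  set S' := insert p' S with hS'def
  have hS'n : ∀ p ∈ S', p < n := by
    intro p hp
    rcases mem_insert.1 hp with rfl | h
    · exact hp'n'
    · exact hS p h
  have hQ' : S'.image π = insert x (S.image π) := by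
    rw [hS'def, image_insert, hp'x]
  have hT' : insert n (S'.image π) = insert x (insert n (S.image π)) := by
    rw [hQ', Finset.insert_comm]
  -- (i)
  have hnxtq0 : nxtF n π S' q0 = x := by
    apply le_antisymm
    · exact nxtF_le n π S' (by rw [hT']; exact mem_insert_self _ _) hq0x
    · have hsp := nxtF_spec n π S' q0 hq0n
      rw [hT'] at hsp
      rcases mem_insert.1 hsp.1 with heq | hmem
      · omega
      · have := nxtF_le n π S hmem hsp.2
        omega
  -- (ii)
  have hnxtx : nxtF n π S' x = m := by
    apply le_antisymm
    · exact nxtF_le n π S' (by rw [hT']; exact mem_insert_of_mem hmT) hxm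
    · have hsp := nxtF_spec n π S' x hxn
      rw [hT'] at hsp
      rcases mem_insert.1 hsp.1 with heq | hmem
      · omega
      · exact nxtF_le n π S hmem (by omega)
  -- (iii)
  have hnxtq : ∀ q ∈ S.image π, q ≠ q0 → nxtF n π S' q = nxtF n π S q := by
    intro q hq hne
    have hqn : q < n := by
      obtain ⟨p, hp, rfl⟩ := mem_image.1 hq
      exact hmaps p hp
    have hqspec := nxtF_spec n π S q hqn
    apply le_antisymm
    · exact nxtF_le n π S' (by rw [hT']; exact mem_insert_of_mem hqspec.1) hqspec.2
    · have hsp := nxtF_spec n π S' q hqn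
      rw [hT'] at hsp
      rcases mem_insert.1 hsp.1 with heq | hmem
      · -- nxtF n π S' q = x
        rcases Nat.lt_trichotomy q q0 with h | h | h
        · have := nxtF_le n π S (mem_insert_of_mem hq0) h
          omega
        · omega
        · have := nxtF_le n π S (mem_insert_of_mem hq) h
          omega
      · exact nxtF_le n π S hmem hsp.2
  -- weights over S with new gap structure
  set w : ℕ → ℕ := fun q => (S.filter (fun p => q < p ∧ p < nxtF n π S' q)).card with hw
  have hwq0 : w q0 = α - 1 := by
    rw [hw]
    simp only
    rw [← hxrank]
    congr 1
    ext p
    simp only [hF, mem_filter, hnxtq0]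
    constructor
    · rintro ⟨h1, h2, h3⟩
      exact ⟨⟨h1, h2, by omega⟩, h3⟩
    · rintro ⟨⟨h1, h2, _⟩, h4⟩
      exact ⟨h1, h2, h4⟩
  have hwx : α + w x = F.card := by
    have h1 : S.filter (fun p => x < p ∧ p < nxtF n π S' x) = F.filter (fun y => x < y) := by
      ext p
      simp only [hF, mem_filter, hnxtx]
      constructor
      · rintro ⟨h1, h2, h3⟩
        exact ⟨⟨h1, by omega, h3⟩, h2⟩
      · rintro ⟨⟨h1, _, h3⟩, h4⟩
        exact ⟨h1, h4, h3⟩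
    have h2 := Finset.card_filter_add_card_filter_not (s := F) (p := fun y => y < x)
    have h3 : F.filter (fun y => ¬ y < x) = insert x (F.filter (fun y => x < y)) := by
      ext y
      simp only [mem_filter, mem_insert]
      constructor
      · rintro ⟨hyF, hylt⟩
        rcases Nat.lt_trichotomy y x with h | h | h
        · omega
        · left; exact h
        · right; exact ⟨hyF, h⟩
      · rintro (rfl | ⟨hyF, h⟩)
        · exact ⟨hxF, by omega⟩
        · exact ⟨hyF, by omega⟩
    rw [h3, card_insert_of_notMem (by simp [mem_filter])] at h2
    rw [hw]
    simp only
    rw [h1]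
    omega
  have hwerase : ∀ q ∈ (S.image π).erase q0, w q = cntF n π S q := by
    intro q hq
    have hq1 := mem_of_mem_erase hq
    have hq2 := Finset.ne_of_mem_erase hq
    rw [hw]
    simp only
    unfold cntF
    rw [hnxtq q hq1 hq2]
  have hcnt' : ∀ q, cntF n π S' q ≤ w q + (if q < p' ∧ p' < nxtF n π S' q then 1 else 0) := by
    intro q
    show (S'.filter (fun p => q < p ∧ p < nxtF n π S' q)).card ≤ _
    rw [hS'def, Finset.filter_insert, ← hS'def]
    by_cases h : q < p' ∧ p' < nxtF n π S' q
    · rw [if_pos h, if_pos h]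
      have h1 := card_insert_le p' (S.filter (fun p => q < p ∧ p < nxtF n π S' q))
      have h2 : w q = (S.filter (fun p => q < p ∧ p < nxtF n π S' q)).card := by rw [hw]
      omega
    · rw [if_neg h, if_neg h]
      have h2 : w q = (S.filter (fun p => q < p ∧ p < nxtF n π S' q)).card := by rw [hw]
      omega
  have hxQ : x ∉ S.image π := fun h => hxT (mem_insert_of_mem h)
  have hcntq0 : cntF n π S q0 = F.card := by
    unfold cntF
    rw [hF, hm]
  set c := α - 1 with hc
  set E := ∑ q ∈ (S.image π).erase q0, (cntF n π S q - c) with hE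
  have hPhiS : PhiF n π α S = (F.card - c) + E := by
    unfold PhiF
    rw [← Finset.add_sum_erase _ _ hq0, ← hc, hcntq0, hE]
  have hX : ∑ q ∈ insert x (S.image π), (if q < p' ∧ p' < nxtF n π S' q then 1 else 0) ≤ 1 := by
    have h1 := onegap n π S' p'
    rw [hQ'] at h1
    rw [Finset.sum_boole]
    exact_mod_cast h1
  have hsplit : PhiF n π α S' ≤ (w x - c) + (w q0 - c) + E + 1 := by
    unfold PhiF
    rw [hQ', ← hc]
    calc ∑ q ∈ insert x (S.image π), (cntF n π S' q - c)
        ≤ ∑ q ∈ insert x (S.image π),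
            ((w q - c) + (if q < p' ∧ p' < nxtF n π S' q then 1 else 0)) := by
          apply Finset.sum_le_sum
          intro q hq
          have h2 := hcnt' q
          by_cases h : q < p' ∧ p' < nxtF n π S' q
          · rw [if_pos h] at h2 ⊢; omega
          · rw [if_neg h] at h2 ⊢; omega
      _ = (∑ q ∈ insert x (S.image π), (w q - c)) +
            ∑ q ∈ insert x (S.image π), (if q < p' ∧ p' < nxtF n π S' q then 1 else 0) := by
          rw [Finset.sum_add_distrib]
      _ ≤ (∑ q ∈ insert x (S.image π), (w q - c)) + 1 := by omega
      _ = ((w x - c) + ∑ q ∈ S.image π, (w q - c)) + 1 := by rw [Finset.sum_insert hxQ]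
      _ = ((w x - c) + ((w q0 - c) + ∑ q ∈ (S.image π).erase q0, (w q - c))) + 1 := by
          rw [← Finset.add_sum_erase _ _ hq0]
      _ = (w x - c) + (w q0 - c) + E + 1 := by
          rw [hE]
          have heq : ∑ q ∈ (S.image π).erase q0, (w q - c)
              = ∑ q ∈ (S.image π).erase q0, (cntF n π S q - c) :=
            Finset.sum_congr rfl (fun q hq => by rw [hwerase q hq])
          rw [heq]
          ring
  have hFcard : α + w x = F.card := hwx
  clear_value S' w c E
  refine ⟨p', hp'n', hp'S, ?_⟩
  rw [← hS'def, hPhiS]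
  omega

lemma build (n : ℕ) (π : ℕ → ℕ) (hπ : Set.BijOn π (Set.Iio n) (Set.Iio n))
    (α : ℕ) (hα : 2 ≤ α) :
    ∀ (k : ℕ) (S : Finset ℕ), (∀ p ∈ S, p < n) → PhiF n π α S ≤ k →
    ∃ S', S ⊆ S' ∧ (∀ p ∈ S', p < n) ∧
      S'.card * (α - 1) ≤ S.card * (α - 1) + PhiF n π α S ∧
      ∀ q ∈ S'.image π, cntF n π S' q < 2 * α := by
  intro k
  induction k with
  | zero =>
    intro S hS hk
    refine ⟨S, Finset.Subset.refl _, hS, Nat.le_add_right _ _, ?_⟩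
    intro q hq
    by_contra hbad
    push_neg at hbad
    have h1 : cntF n π S q - (α - 1) ≤ PhiF n π α S :=
      Finset.single_le_sum (f := fun q => cntF n π S q - (α - 1))
        (fun i _ => Nat.zero_le _) hq
    omega
  | succ k ih =>
    intro S hS hk
    by_cases hgood : ∀ q ∈ S.image π, cntF n π S q < 2 * α
    · exact ⟨S, Finset.Subset.refl _, hS, Nat.le_add_right _ _, hgood⟩
    · push_neg at hgood
      obtain ⟨q0, hq0, hbad⟩ := hgood
      obtain ⟨p', hp'n, hp'S, hstep⟩ := step n π hπ α hα S hS hq0 hbad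
      have hPhi' : PhiF n π α (insert p' S) ≤ k := by omega
      obtain ⟨S', hsub, hS'n, hcard, hgood'⟩ := ih (insert p' S)
        (by
          intro p hp
          rcases Finset.mem_insert.1 hp with rfl | h
          · exact hp'n
          · exact hS p h)
        hPhi'
      refine ⟨S', (Finset.subset_insert _ _).trans hsub, hS'n, ?_, hgood'⟩
      have hci : (insert p' S).card = S.card + 1 := Finset.card_insert_of_notMem hp'S
      rw [hci] at hcard
      have h2 : (S.card + 1) * (α - 1) = S.card * (α - 1) + (α - 1) := by ring
      rw [h2] at hcard
      have h3 : PhiF n π α (insert p' S) + (α - 1) ≤ PhiF n π α S := hstep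
      calc S'.card * (α - 1)
          ≤ S.card * (α - 1) + (α - 1) + PhiF n π α (insert p' S) := hcard
        _ = S.card * (α - 1) + (PhiF n π α (insert p' S) + (α - 1)) := by ring
        _ ≤ S.card * (α - 1) + PhiF n π α S := by omega



/-- Nishimoto–Tabei balancing, parameterized by
Brown–Gagie–Rossi: there exists `P' ⊇ P` inside `{0,…,n−1}` with
`|P'| ≤ α·r/(α−1)` (equivalently at most `r/(α−1)` added elements) such that,
with `Q' = π(P')`, every gap between consecutive elements of `Q' ∪ {n}` has
weight strictly less than `2α` with respect to `P'`. -/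
theorem balancing_exists
    (n : ℕ) (hn : 1 ≤ n) (π : ℕ → ℕ)
    (hπ : Set.BijOn π (Set.Iio n) (Set.Iio n))
    (P : Finset ℕ)
    (hP : P = (Finset.range n).filter (fun i => i = 0 ∨ π i ≠ π (i - 1) + 1))
    (α : ℕ) (hα : 2 ≤ α) :
    ∃ P' : Finset ℕ, P ⊆ P' ∧ (∀ p ∈ P', p < n) ∧
      P'.card * (α - 1) ≤ α * P.card ∧
      (P'.card - P.card) * (α - 1) ≤ P.card ∧
      ∀ qs ∈ insert n (P'.image π), ∀ qe ∈ insert n (P'.image π), qs < qe →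
        (∀ x ∈ insert n (P'.image π), ¬(qs < x ∧ x < qe)) →
        (P'.filter (fun p => qs < p ∧ p < qe)).card < 2 * α := by
  have hPsub : ∀ p ∈ P, p < n := by
    intro p hp
    rw [hP] at hp
    exact Finset.mem_range.1 (Finset.mem_filter.1 hp).1
  obtain ⟨P', hsub, hlt, hcard, hgood⟩ :=
    build n π hπ α hα (PhiF n π α P) P hPsub le_rfl
  have hPhi : PhiF n π α P ≤ P.card := Phi_le n π α P
  have hle : P.card ≤ P'.card := Finset.card_le_card hsub
  refine ⟨P', hsub, hlt, ?_, ?_, ?_⟩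
  · have h1 : P'.card * (α - 1) ≤ P.card * (α - 1) + P.card := by omega
    have h2 : P.card * (α - 1) + P.card = P.card * α := by
      have : α - 1 + 1 = α := by omega
      calc P.card * (α - 1) + P.card = P.card * ((α - 1) + 1) := by ring
        _ = P.card * α := by rw [this]
    rw [h2] at h1
    rw [mul_comm α P.card]
    exact h1
  · have h2 : P'.card = P.card + (P'.card - P.card) := by omega
    rw [h2, add_mul] at hcard
    have h3 : (P'.card - P.card) * (α - 1) ≤ PhiF n π α P :=
      Nat.le_of_add_le_add_left hcard
    omega
  · intro qs hqs qe hqe hlt2 hempty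
    have hqen : qe ≤ n := by
      rcases Finset.mem_insert.1 hqe with rfl | h
      · exact le_rfl
      · obtain ⟨p, hp, rfl⟩ := Finset.mem_image.1 h
        exact le_of_lt (hπ.mapsTo (hlt p hp))
    have hqsQ : qs ∈ P'.image π := by
      rcases Finset.mem_insert.1 hqs with rfl | h
      · omega
      · exact h
    have hqsn : qs < n := lt_of_lt_of_le hlt2 hqen
    have hnx := nxtF_spec n π P' qs hqsn
    have h1 : nxtF n π P' qs ≤ qe := nxtF_le n π P' hqe hlt2
    have h3 := hempty _ hnx.1
    have h4 : ¬ nxtF n π P' qs < qe := fun hh => h3 ⟨hnx.2, hh⟩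
    have heq : nxtF n π P' qs = qe := by omega
    have h5 := hgood qs hqsQ
    unfold cntF at h5
    rw [heq] at h5
    exact h5
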